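/- There exist constants R₀ > 0 with R₀ < √(3/(4π)) and C > 0 such that for every R with 0 < R < R₀ there exist functions m_R, ρ_R : [0,R] → ℝ, continuous on [0,R] and continuously differentiable on (0,R), with ρ_R monotone decreasing and m_R monotone increasing, solving the hard star ODE system on (0,R) with boundary conditions m_R(0) = 0 and ρ_R(R) = 1, and satisfying the bounds 1 ≤ ρ_R(r) ≤ 1 + C R² and 1 ≤ (3/(4π))·m_R(r)/r³ ≤ 1 + C R² for all r ∈ (0,R]. -/

import Mathlib

open Real Set

namespace HardStarAux

open MeasureTheory intervalIntegral

noncomputable def mf (f : ℝ → ℝ) (s : ℝ) : ℝ := ∫ t in (0:ℝ)..s, 4 * π * t ^ 2 * f t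

noncomputable def G (f : ℝ → ℝ) (s : ℝ) : ℝ :=
  ((2 * f s - 1) / (s - 2 * mf f s)) * (mf f s / s + 4 * π * s ^ 2 * (f s - 1))

def cl (R r : ℝ) : ℝ := max 0 (min r R)

noncomputable def T (R : ℝ) (f : ℝ → ℝ) (r : ℝ) : ℝ := 1 + ∫ s in cl R r..R, G f s

variable {f g : ℝ → ℝ}

lemma contI (hf : Continuous f) : Continuous fun t => 4 * π * t ^ 2 * f t := by fun_prop

lemma mf_hasDerivAt (hf : Continuous f) (s : ℝ) :
    HasDerivAt (mf f) (4 * π * s ^ 2 * f s) s :=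
  integral_hasDerivAt_right ((contI hf).intervalIntegrable _ _)
    ((contI hf).stronglyMeasurable.stronglyMeasurableAtFilter) (contI hf).continuousAt

lemma mf_cont (hf : Continuous f) : Continuous (mf f) :=
  continuous_iff_continuousAt.2 fun s => (mf_hasDerivAt hf s).continuousAt

lemma int_cube (c s : ℝ) : ∫ t in (0:ℝ)..s, c * t ^ 2 = c / 3 * s ^ 3 := by
  rw [intervalIntegral.integral_const_mul, integral_pow]
  norm_num; ring

lemma mf_lb (hf : Continuous f) (h1 : ∀ x, 1 ≤ f x) {s : ℝ} (hs : 0 ≤ s) :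
    4 * π / 3 * s ^ 3 ≤ mf f s := by
  have := int_cube (4 * π) s
  rw [show (4:ℝ) * π / 3 = (4 * π) / 3 by ring, ← this]
  apply intervalIntegral.integral_mono_on hs
    ((by fun_prop : Continuous fun t : ℝ => 4 * π * t ^ 2).intervalIntegrable _ _)
    ((contI hf).intervalIntegrable _ _)
  intro x hx
  nlinarith [mul_nonneg (mul_nonneg (by positivity : (0:ℝ) ≤ 4*π) (sq_nonneg x)) (sub_nonneg.2 (h1 x))]

lemma mf_ub (hf : Continuous f) (h2 : ∀ x, f x ≤ 2) {s : ℝ} (hs : 0 ≤ s) :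
    mf f s ≤ 8 * π / 3 * s ^ 3 := by
  have := int_cube (8 * π) s
  rw [show (8:ℝ) * π / 3 = (8 * π) / 3 by ring, ← this]
  apply intervalIntegral.integral_mono_on hs
    ((contI hf).intervalIntegrable _ _)
    ((by fun_prop : Continuous fun t : ℝ => 8 * π * t ^ 2).intervalIntegrable _ _)
  intro x hx
  nlinarith [mul_nonneg (mul_nonneg (by positivity : (0:ℝ) ≤ 4*π) (sq_nonneg x)) (sub_nonneg.2 ((sub_nonneg.2 (h2 x)) : 0 ≤ 2 - f x))]

lemma mf_nonneg (hf : Continuous f) (h1 : ∀ x, 1 ≤ f x) {s : ℝ} (hs : 0 ≤ s) :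
    0 ≤ mf f s := by
  have := mf_lb hf h1 hs
  nlinarith [Real.pi_pos, pow_nonneg hs 3]

lemma den_lb (hf : Continuous f) (h2 : ∀ x, f x ≤ 2) {s : ℝ} (h0 : 0 ≤ s) (hs : s ≤ 1/100) :
    s / 2 ≤ s - 2 * mf f s := by
  have hu := mf_ub hf h2 h0
  have hs2 : s ^ 2 ≤ 1 / 10000 := by nlinarith
  nlinarith [Real.pi_le_four, Real.pi_pos, pow_nonneg h0 3, mul_le_mul_of_nonneg_left hs2 h0]

lemma G_zero : G f 0 = 0 := by
  simp [G, mf]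

lemma G_nonneg (hf : Continuous f) (h1 : ∀ x, 1 ≤ f x) (h2 : ∀ x, f x ≤ 2)
    {s : ℝ} (h0 : 0 ≤ s) (hs : s ≤ 1/100) : 0 ≤ G f s := by
  rcases eq_or_lt_of_le h0 with h | h
  · rw [← h, G_zero]
  · apply mul_nonneg
    · apply div_nonneg (by linarith [h1 s])
      linarith [den_lb hf h2 h0 hs]
    · apply add_nonneg (div_nonneg (mf_nonneg hf h1 h0) h0)
      have := h1 s
      nlinarith [mul_nonneg (mul_nonneg (by positivity : (0:ℝ) ≤ 4*π) (sq_nonneg s)) (sub_nonneg.2 (h1 s))]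

lemma B_ub (hf : Continuous f) (h1 : ∀ x, 1 ≤ f x) (h2 : ∀ x, f x ≤ 2)
    {s : ℝ} (h0 : 0 < s) (hs : s ≤ 1/100) :
    mf f s / s + 4 * π * s ^ 2 * (f s - 1) ≤ 7 * π * s ^ 2 := by
  have hu := mf_ub hf h2 h0.le
  have h1' : mf f s / s ≤ 8 * π / 3 * s ^ 2 := by
    rw [div_le_iff₀ h0]; nlinarith
  have h2' : 4 * π * s ^ 2 * (f s - 1) ≤ 4 * π * s ^ 2 := by
    nlinarith [mul_nonneg (mul_nonneg (by positivity : (0:ℝ) ≤ 4*π) (sq_nonneg s)) (sub_nonneg.2 ((sub_nonneg.2 (h2 s)) : 0 ≤ 2 - f s))]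
  nlinarith [Real.pi_pos, sq_nonneg s]

lemma A_ub (hf : Continuous f) (h1 : ∀ x, 1 ≤ f x) (h2 : ∀ x, f x ≤ 2)
    {s : ℝ} (h0 : 0 < s) (hs : s ≤ 1/100) :
    (2 * f s - 1) / (s - 2 * mf f s) ≤ 6 / s := by
  have hd := den_lb hf h2 h0.le hs
  have : (2 * f s - 1) / (s - 2 * mf f s) ≤ 3 / (s / 2) :=
    div_le_div₀ (by norm_num) (by linarith [h2 s]) (by linarith) hd
  calc (2 * f s - 1) / (s - 2 * mf f s) ≤ 3 / (s / 2) := this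
    _ = 6 / s := by rw [div_div_eq_mul_div]; norm_num

lemma G_ub (hf : Continuous f) (h1 : ∀ x, 1 ≤ f x) (h2 : ∀ x, f x ≤ 2)
    {s : ℝ} (h0 : 0 ≤ s) (hs : s ≤ 1/100) : G f s ≤ 42 * π * s := by
  rcases eq_or_lt_of_le h0 with h | h
  · rw [← h, G_zero]; positivity
  · have hB0 : 0 ≤ mf f s / s + 4 * π * s ^ 2 * (f s - 1) := by
      apply add_nonneg (div_nonneg (mf_nonneg hf h1 h0) h0)
      nlinarith [mul_nonneg (mul_nonneg (by positivity : (0:ℝ) ≤ 4*π) (sq_nonneg s)) (sub_nonneg.2 (h1 s))]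
    calc G f s ≤ (6 / s) * (mf f s / s + 4 * π * s ^ 2 * (f s - 1)) := by
          exact mul_le_mul_of_nonneg_right (A_ub hf h1 h2 h hs) hB0
      _ ≤ (6 / s) * (7 * π * s ^ 2) := by
          exact mul_le_mul_of_nonneg_left (B_ub hf h1 h2 h hs) (by positivity)
      _ = 42 * π * s := by field_simp; ring

lemma G_meas (hf : Continuous f) : Measurable (G f) := by
  have h1 : Measurable f := hf.measurable
  have h2 : Measurable (mf f) := (mf_cont hf).measurable
  unfold G
  exact (((measurable_const.mul h1).sub measurable_const).div
      (measurable_id.sub (measurable_const.mul h2))).mul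
    ((h2.div measurable_id).add ((measurable_const.mul (measurable_id.pow_const 2)).mul
      (h1.sub measurable_const)))

lemma G_intOn (hf : Continuous f) (h1 : ∀ x, 1 ≤ f x) (h2 : ∀ x, f x ≤ 2) :
    IntegrableOn (G f) (Ioc (0:ℝ) (1/100)) volume := by
  apply Measure.integrableOn_of_bounded (M := 42 * π * (1/100)) measure_Ioc_lt_top.ne
    (G_meas hf).aestronglyMeasurable
  rw [ae_restrict_iff' measurableSet_Ioc]
  apply ae_of_all
  intro s hsm
  rw [Real.norm_eq_abs, abs_of_nonneg (G_nonneg hf h1 h2 hsm.1.le hsm.2)]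
  have := G_ub hf h1 h2 hsm.1.le hsm.2
  nlinarith [Real.pi_pos, hsm.1, hsm.2]

lemma G_ii (hf : Continuous f) (h1 : ∀ x, 1 ≤ f x) (h2 : ∀ x, f x ≤ 2)
    {a b : ℝ} (ha : a ∈ Icc (0:ℝ) (1/100)) (hb : b ∈ Icc (0:ℝ) (1/100)) :
    IntervalIntegrable (G f) volume a b := by
  rcases le_total a b with h | h
  · rw [intervalIntegrable_iff_integrableOn_Ioc_of_le h]
    exact (G_intOn hf h1 h2).mono_set (Ioc_subset_Ioc ha.1 hb.2)
  · apply IntervalIntegrable.symm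
    rw [intervalIntegrable_iff_integrableOn_Ioc_of_le h]
    exact (G_intOn hf h1 h2).mono_set (Ioc_subset_Ioc hb.1 ha.2)

lemma G_contAt (hf : Continuous f) (h1 : ∀ x, 1 ≤ f x) (h2 : ∀ x, f x ≤ 2)
    {s : ℝ} (h0 : 0 < s) (hs : s < 1/100) : ContinuousAt (G f) s := by
  have hd : s - 2 * mf f s ≠ 0 := by
    have := den_lb hf h2 h0.le hs.le; linarith
  have hmc : Continuous (mf f) := mf_cont hf
  apply ContinuousAt.mul
  · exact ContinuousAt.div (by fun_prop) (by fun_prop) hd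
  · exact ContinuousAt.add (ContinuousAt.div hmc.continuousAt continuousAt_id h0.ne') (by fun_prop)

variable {R : ℝ}

lemma cl_mem (hR0 : 0 < R) (r : ℝ) : cl R r ∈ Icc 0 R :=
  ⟨le_max_left _ _, max_le hR0.le (min_le_right _ _)⟩

lemma cl_eq {r : ℝ} (hr : r ∈ Icc 0 R) : cl R r = r := by
  rw [cl, min_eq_left hr.2, max_eq_right hr.1]

lemma cl_lip (R a b : ℝ) : |cl R a - cl R b| ≤ |a - b| := by
  unfold cl
  calc |max 0 (min a R) - max 0 (min b R)|
      = |max (min a R) 0 - max (min b R) 0| := by rw [max_comm, max_comm (min b R)]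
    _ ≤ |min a R - min b R| := abs_max_sub_max_le_abs _ _ _
    _ ≤ max |a - b| |R - R| := abs_min_sub_min_le_max _ _ _ _
    _ ≤ |a - b| := by simp

section Tlemmas

variable (hf : Continuous f) (h1 : ∀ x, 1 ≤ f x) (h2 : ∀ x, f x ≤ 2)
  (hR0 : 0 < R) (hR : R < 1/100)

include hf h1 h2 hR0 hR

lemma RIcc : R ∈ Icc (0:ℝ) (1/100) := ⟨hR0.le, hR.le⟩

lemma T_lb (r : ℝ) : 1 ≤ T R f r := by
  have hc := cl_mem hR0 r
  have : 0 ≤ ∫ s in cl R r..R, G f s := by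
    apply intervalIntegral.integral_nonneg hc.2
    intro u hu
    exact G_nonneg hf h1 h2 (hc.1.trans hu.1) (hu.2.trans hR.le)
  simp only [T]; linarith

lemma T_ub (r : ℝ) : T R f r ≤ 1 + 42 * π * R ^ 2 := by
  have hc := cl_mem hR0 r
  have hb : ‖∫ s in cl R r..R, G f s‖ ≤ 42 * π * R * |R - cl R r| := by
    apply intervalIntegral.norm_integral_le_of_norm_le_const
    intro x hx
    rw [uIoc_of_le hc.2] at hx
    rw [Real.norm_eq_abs, abs_of_nonneg (G_nonneg hf h1 h2 (hc.1.trans hx.1.le) (hx.2.trans hR.le))]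
    have := G_ub hf h1 h2 (hc.1.trans hx.1.le) (hx.2.trans hR.le)
    nlinarith [Real.pi_pos, hx.2]
  rw [Real.norm_eq_abs] at hb
  have h3 : |R - cl R r| ≤ R := by rw [abs_of_nonneg (by linarith [hc.2])]; linarith [hc.1]
  have h4 := le_trans (le_abs_self _) hb
  simp only [T]
  nlinarith [Real.pi_pos, abs_nonneg (R - cl R r), mul_le_mul_of_nonneg_left h3 (by positivity : (0:ℝ) ≤ 42 * π * R)]

lemma T_ub2 (r : ℝ) : T R f r ≤ 2 := by
  have := T_ub hf h1 h2 hR0 hR r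
  nlinarith [Real.pi_le_four, Real.pi_pos]

lemma T_cont : Continuous (T R f) := by
  have key : ∀ a b : ℝ, dist (T R f a) (T R f b) ≤ (42 * π * (1/100)) * dist a b := by
    intro a b
    have hca := cl_mem hR0 a; have hcb := cl_mem hR0 b
    have hIa : cl R a ∈ Icc (0:ℝ) (1/100) := ⟨hca.1, hca.2.trans hR.le⟩
    have hIb : cl R b ∈ Icc (0:ℝ) (1/100) := ⟨hcb.1, hcb.2.trans hR.le⟩
    have hadd : (∫ s in cl R b..cl R a, G f s) + (∫ s in cl R a..R, G f s)
        = ∫ s in cl R b..R, G f s :=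
      intervalIntegral.integral_add_adjacent_intervals
        (G_ii hf h1 h2 hIb hIa) (G_ii hf h1 h2 hIa (RIcc hf h1 h2 hR0 hR))
    have hdiff : T R f a - T R f b = -∫ s in cl R b..cl R a, G f s := by
      simp only [T]; linarith
    have hb : ‖∫ s in cl R b..cl R a, G f s‖ ≤ (42 * π * (1/100)) * |cl R a - cl R b| := by
      apply intervalIntegral.norm_integral_le_of_norm_le_const
      intro x hx
      have hx1 : 0 ≤ x := le_trans (le_min hIb.1 hIa.1) (le_of_lt hx.1)
      have hx2 : x ≤ 1/100 := le_trans hx.2 (max_le hIb.2 hIa.2)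
      rw [Real.norm_eq_abs, abs_of_nonneg (G_nonneg hf h1 h2 hx1 hx2)]
      have := G_ub hf h1 h2 hx1 hx2
      nlinarith [Real.pi_pos]
    rw [Real.dist_eq, Real.dist_eq, hdiff, abs_neg]
    calc |∫ s in cl R b..cl R a, G f s| ≤ (42 * π * (1/100)) * |cl R a - cl R b| := by
          rw [← Real.norm_eq_abs]; exact hb
      _ ≤ (42 * π * (1/100)) * |a - b| :=
          mul_le_mul_of_nonneg_left (cl_lip R a b) (by positivity)
  exact (LipschitzWith.of_dist_le_mul (K := Real.toNNReal (42 * π * (1/100))) (by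
    intro a b
    calc dist (T R f a) (T R f b) ≤ (42 * π * (1/100)) * dist a b := key a b
      _ = _ := by rw [Real.coe_toNNReal _ (by positivity)])).continuous

end Tlemmas

section Contraction

variable {D : ℝ}

lemma mf_lip (hf : Continuous f) (hg : Continuous g) (hD0 : 0 ≤ D)
    (hD : ∀ x, |f x - g x| ≤ D) {s : ℝ} (h0 : 0 < s) (hs : s ≤ 1/100) :
    |mf f s - mf g s| ≤ 4 * π * s ^ 3 * D := by
  have hsub : mf f s - mf g s = ∫ t in (0:ℝ)..s, (4 * π * t ^ 2 * f t - 4 * π * t ^ 2 * g t) := by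
    rw [intervalIntegral.integral_sub ((contI hf).intervalIntegrable _ _)
      ((contI hg).intervalIntegrable _ _)]; rfl
  rw [hsub, ← Real.norm_eq_abs]
  have := intervalIntegral.norm_integral_le_of_norm_le_const
    (C := 4 * π * s ^ 2 * D) (f := fun t => 4 * π * t ^ 2 * f t - 4 * π * t ^ 2 * g t)
    (a := 0) (b := s) ?_
  · calc ‖_‖ ≤ 4 * π * s ^ 2 * D * |s - 0| := this
      _ = 4 * π * s ^ 3 * D := by rw [sub_zero, abs_of_nonneg h0.le]; ring
  · intro x hx
    rw [uIoc_of_le h0.le] at hx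
    have hx0 : 0 < x := hx.1
    have hxs : x ≤ s := hx.2
    show ‖4 * π * x ^ 2 * f x - 4 * π * x ^ 2 * g x‖ ≤ 4 * π * s ^ 2 * D
    rw [Real.norm_eq_abs, show 4 * π * x ^ 2 * f x - 4 * π * x ^ 2 * g x
        = (4 * π * x ^ 2) * (f x - g x) by ring, abs_mul,
      abs_of_nonneg (by positivity : (0:ℝ) ≤ 4 * π * x ^ 2)]
    have h2 := hD x
    have : 4 * π * x ^ 2 * |f x - g x| ≤ 4 * π * s ^ 2 * D := by
      gcongr
    linarith

set_option maxHeartbeats 2000000 in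
lemma G_lip (hf : Continuous f) (h1 : ∀ x, 1 ≤ f x) (h2 : ∀ x, f x ≤ 2)
    (hg : Continuous g) (hg1 : ∀ x, 1 ≤ g x) (hg2 : ∀ x, g x ≤ 2)
    (hD0 : 0 ≤ D) (hD : ∀ x, |f x - g x| ≤ D)
    {s : ℝ} (h0 : 0 < s) (hs : s ≤ 1/100) :
    |G f s - G g s| ≤ 420 * s * D := by
  set m1 := mf f s with hm1def
  set m2 := mf g s with hm2def
  set d1 := s - 2 * m1 with hd1def
  set d2 := s - 2 * m2 with hd2def
  have hd1 : s / 2 ≤ d1 := den_lb hf h2 h0.le hs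
  have hd2 : s / 2 ≤ d2 := den_lb hg hg2 h0.le hs
  have hd1p : 0 < d1 := by linarith
  have hd2p : 0 < d2 := by linarith
  have hm1u : m1 ≤ 8 * π / 3 * s ^ 3 := mf_ub hf h2 h0.le
  have hm2u : m2 ≤ 8 * π / 3 * s ^ 3 := mf_ub hg hg2 h0.le
  have hm1n : 0 ≤ m1 := mf_nonneg hf h1 h0.le
  have hm2n : 0 ≤ m2 := mf_nonneg hg hg1 h0.le
  have hdm : |m1 - m2| ≤ 4 * π * s ^ 3 * D := mf_lip hf hg hD0 hD h0 hs
  set a1 := (2 * f s - 1) / d1 with ha1def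
  set a2 := (2 * g s - 1) / d2 with ha2def
  set b1 := m1 / s + 4 * π * s ^ 2 * (f s - 1) with hb1def
  set b2 := m2 / s + 4 * π * s ^ 2 * (g s - 1) with hb2def
  -- bound |a1 - a2|
  have hnum : |(2 * f s - 1) * d2 - (2 * g s - 1) * d1| ≤ 2 * D * s + 24 * π * s ^ 3 * D := by
    have hexp : (2 * f s - 1) * d2 - (2 * g s - 1) * d1
        = (2 * f s - 2 * g s) * d2 + (2 * g s - 1) * (2 * (m1 - m2)) := by
      rw [hd1def, hd2def]; ring
    rw [hexp]
    calc |(2 * f s - 2 * g s) * d2 + (2 * g s - 1) * (2 * (m1 - m2))|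
        ≤ |(2 * f s - 2 * g s) * d2| + |(2 * g s - 1) * (2 * (m1 - m2))| := abs_add_le _ _
      _ ≤ (2 * D) * s + 3 * (2 * (4 * π * s ^ 3 * D)) := by
          apply add_le_add
          · rw [abs_mul]
            apply mul_le_mul _ _ (abs_nonneg _) (by positivity)
            · rw [show 2 * f s - 2 * g s = 2 * (f s - g s) by ring, abs_mul]
              have := hD s
              rw [abs_of_nonneg (by norm_num : (0:ℝ) ≤ 2)]
              linarith
            · rw [abs_of_nonneg hd2p.le]; rw [hd2def]; linarith
          · rw [abs_mul, abs_mul]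
            apply mul_le_mul
            · rw [abs_of_nonneg (by linarith [hg1 s])]; linarith [hg2 s]
            · rw [abs_of_nonneg (by norm_num : (0:ℝ) ≤ 2)]; linarith
            · positivity
            · norm_num
      _ = 2 * D * s + 24 * π * s ^ 3 * D := by ring
  have hda : |a1 - a2| ≤ 8 * D / s + 96 * π * s * D := by
    have heq : a1 - a2 = ((2 * f s - 1) * d2 - (2 * g s - 1) * d1) / (d1 * d2) := by
      rw [ha1def, ha2def, div_sub_div _ _ hd1p.ne' hd2p.ne']
      ring_nf
    rw [heq, abs_div, abs_of_nonneg (by positivity : (0:ℝ) ≤ d1 * d2)]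
    have hds : s ^ 2 / 4 ≤ d1 * d2 := by nlinarith
    calc |(2 * f s - 1) * d2 - (2 * g s - 1) * d1| / (d1 * d2)
        ≤ (2 * D * s + 24 * π * s ^ 3 * D) / (s ^ 2 / 4) :=
          div_le_div₀ (by positivity) hnum (by positivity) hds
      _ = 8 * D / s + 96 * π * s * D := by field_simp; ring
  -- bound |b1 - b2|
  have hdb : |b1 - b2| ≤ 8 * π * s ^ 2 * D := by
    have heq : b1 - b2 = (m1 - m2) / s + 4 * π * s ^ 2 * (f s - g s) := by
      rw [hb1def, hb2def]; ring
    rw [heq]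
    calc |(m1 - m2) / s + 4 * π * s ^ 2 * (f s - g s)|
        ≤ |(m1 - m2) / s| + |4 * π * s ^ 2 * (f s - g s)| := abs_add_le _ _
      _ ≤ (4 * π * s ^ 3 * D) / s + 4 * π * s ^ 2 * D := by
          apply add_le_add
          · rw [abs_div, abs_of_nonneg h0.le]
            gcongr
          · rw [abs_mul, abs_of_nonneg (by positivity : (0:ℝ) ≤ 4 * π * s ^ 2)]
            exact mul_le_mul_of_nonneg_left (hD s) (by positivity)
      _ = 8 * π * s ^ 2 * D := by field_simp; ring
  -- bounds on |a1| and |b2|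
  have ha1b : |a1| ≤ 6 / s := by
    rw [abs_of_nonneg (div_nonneg (by linarith [h1 s]) hd1p.le)]
    exact A_ub hf h1 h2 h0 hs
  have hb2b : |b2| ≤ 7 * π * s ^ 2 := by
    rw [abs_of_nonneg (add_nonneg (div_nonneg hm2n h0.le)
      (by nlinarith [mul_nonneg (mul_nonneg (by positivity : (0:ℝ) ≤ 4*π) (sq_nonneg s)) (sub_nonneg.2 (hg1 s))]))]
    exact B_ub hg hg1 hg2 h0 hs
  -- combine
  have e1 : G f s = a1 * b1 := by
    rw [ha1def, hb1def, hd1def, hm1def]; rfl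
  have e2 : G g s = a2 * b2 := by
    rw [ha2def, hb2def, hd2def, hm2def]; rfl
  clear_value m1 m2 d1 d2 a1 a2 b1 b2
  have hsplit : G f s - G g s = (a1 - a2) * b2 + a1 * (b1 - b2) := by
    rw [e1, e2]; ring
  rw [hsplit]
  have hs2 : s ^ 2 ≤ 1/10000 := by nlinarith
  calc |(a1 - a2) * b2 + a1 * (b1 - b2)|
      ≤ |a1 - a2| * |b2| + |a1| * |b1 - b2| := by
        rw [← abs_mul, ← abs_mul]; exact abs_add_le _ _
    _ ≤ (8 * D / s + 96 * π * s * D) * (7 * π * s ^ 2) + (6 / s) * (8 * π * s ^ 2 * D) := by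
        apply add_le_add
        · exact mul_le_mul hda hb2b (abs_nonneg _) (by positivity)
        · exact mul_le_mul ha1b hdb (abs_nonneg _) (by positivity)
    _ = 56 * π * s * D + 672 * π ^ 2 * s ^ 3 * D + 48 * π * s * D := by field_simp; ring
    _ ≤ 420 * s * D := by
        have hp2 : π ^ 2 ≤ 16 := by nlinarith [Real.pi_le_four, Real.pi_pos]
        have hsD : 0 ≤ s * D := mul_nonneg h0.le hD0
        have h1' : π ^ 2 * s ^ 2 ≤ 16 * (1/10000) :=
          mul_le_mul hp2 hs2 (sq_nonneg s) (by norm_num)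
        have key : 672 * π ^ 2 * s ^ 3 * D ≤ 2 * (s * D) := by
          nlinarith [mul_le_mul_of_nonneg_right h1' hsD]
        have key2 : 104 * π * (s * D) ≤ 416 * (s * D) :=
          mul_le_mul_of_nonneg_right (by nlinarith [Real.pi_le_four]) hsD
        nlinarith [key, key2]

end Contraction

section Fixed

variable {D : ℝ}

lemma T_dist (hf : Continuous f) (h1 : ∀ x, 1 ≤ f x) (h2 : ∀ x, f x ≤ 2)
    (hg : Continuous g) (hg1 : ∀ x, 1 ≤ g x) (hg2 : ∀ x, g x ≤ 2)
    (hR0 : 0 < R) (hR : R < 1/100) (hD0 : 0 ≤ D) (hD : ∀ x, |f x - g x| ≤ D) (r : ℝ) :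
    |T R f r - T R g r| ≤ 1/2 * D := by
  have hc := cl_mem hR0 r
  have hI : cl R r ∈ Icc (0:ℝ) (1/100) := ⟨hc.1, hc.2.trans hR.le⟩
  have hRI : R ∈ Icc (0:ℝ) (1/100) := ⟨hR0.le, hR.le⟩
  have hsub : T R f r - T R g r = ∫ s in cl R r..R, (G f s - G g s) := by
    simp only [T]
    rw [intervalIntegral.integral_sub (G_ii hf h1 h2 hI hRI) (G_ii hg hg1 hg2 hI hRI)]
    ring
  rw [hsub, ← Real.norm_eq_abs]
  have hb : ‖∫ s in cl R r..R, (G f s - G g s)‖ ≤ 420 * R * D * |R - cl R r| := by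
    apply intervalIntegral.norm_integral_le_of_norm_le_const
    intro x hx
    rw [uIoc_of_le hc.2] at hx
    have hx0 : 0 < x := lt_of_le_of_lt hc.1 hx.1
    have hx1 : x ≤ 1/100 := hx.2.trans hR.le
    rw [Real.norm_eq_abs]
    have := G_lip hf h1 h2 hg hg1 hg2 hD0 hD hx0 hx1
    nlinarith [hx.2, mul_nonneg hx0.le hD0]
  have h3 : |R - cl R r| ≤ R := by
    rw [abs_of_nonneg (by linarith [hc.2])]; linarith [hc.1]
  calc ‖∫ s in cl R r..R, (G f s - G g s)‖ ≤ 420 * R * D * |R - cl R r| := hb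
    _ ≤ 420 * R * D * R := by
        apply mul_le_mul_of_nonneg_left h3 (by positivity)
    _ ≤ 1/2 * D := by nlinarith [mul_nonneg (mul_nonneg (by norm_num : (0:ℝ) ≤ 420) hR0.le) hD0]

def SS : Set (BoundedContinuousFunction ℝ ℝ) := {F | ∀ x, F x ∈ Icc (1:ℝ) 2}

lemma SS_closed : IsClosed SS := by
  have : SS = ⋂ x : ℝ, (fun F : BoundedContinuousFunction ℝ ℝ => F x) ⁻¹' (Icc (1:ℝ) 2) := by
    ext F; simp [SS, Set.mem_iInter]
  rw [this]
  exact isClosed_iInter fun x =>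
    isClosed_Icc.preimage (continuous_eval_const x)

lemma SS_mem_const : (BoundedContinuousFunction.const ℝ (1:ℝ)) ∈ SS := by
  intro x; simp [SS]

noncomputable def Theta (hR0 : 0 < R) (hR : R < 1/100) (F : ↥SS) : ↥SS := by
  refine ⟨BoundedContinuousFunction.ofNormedAddCommGroup (T R F.1)
    (T_cont F.1.continuous (fun x => (F.2 x).1) (fun x => (F.2 x).2) hR0 hR) 2 (fun x => ?_), fun x => ?_⟩
  · rw [Real.norm_eq_abs, abs_le]
    constructor
    · linarith [T_lb F.1.continuous (fun x => (F.2 x).1) (fun x => (F.2 x).2) hR0 hR x]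
    · exact T_ub2 F.1.continuous (fun x => (F.2 x).1) (fun x => (F.2 x).2) hR0 hR x
  · exact ⟨T_lb F.1.continuous (fun x => (F.2 x).1) (fun x => (F.2 x).2) hR0 hR x,
      T_ub2 F.1.continuous (fun x => (F.2 x).1) (fun x => (F.2 x).2) hR0 hR x⟩

lemma Theta_apply (hR0 : 0 < R) (hR : R < 1/100) (F : ↥SS) (x : ℝ) :
    (Theta hR0 hR F).1 x = T R F.1 x := rfl

lemma Theta_contracting (hR0 : 0 < R) (hR : R < 1/100) :
    ContractingWith (1/2 : NNReal) (Theta (R := R) hR0 hR) := by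
  constructor
  · have : ((1/2 : NNReal) : ℝ) < ((1 : NNReal) : ℝ) := by norm_num
    exact_mod_cast this
  · apply LipschitzWith.of_dist_le_mul
    intro F G'
    rw [Subtype.dist_eq]
    have hd0 : (0:ℝ) ≤ 1/2 * dist F.1 G'.1 := by positivity
    apply (BoundedContinuousFunction.dist_le hd0).2
    intro x
    rw [Real.dist_eq]
    have := T_dist F.1.continuous (fun y => (F.2 y).1) (fun y => (F.2 y).2)
      G'.1.continuous (fun y => (G'.2 y).1) (fun y => (G'.2 y).2) hR0 hR
      dist_nonneg (fun y => by
        rw [← Real.dist_eq]; exact BoundedContinuousFunction.dist_coe_le_dist y) x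
    calc |T R F.1 x - T R G'.1 x| ≤ 1/2 * dist F.1 G'.1 := this
      _ = (1/2 : NNReal) * dist F.1 G'.1 := by norm_num

lemma exists_fixed (hR0 : 0 < R) (hR : R < 1/100) :
    ∃ ρ0 : ℝ → ℝ, Continuous ρ0 ∧ (∀ x, 1 ≤ ρ0 x ∧ ρ0 x ≤ 2) ∧ (∀ x, ρ0 x = T R ρ0 x) := by
  haveI : Nonempty ↥SS := ⟨⟨_, SS_mem_const⟩⟩
  haveI : CompleteSpace ↥SS := SS_closed.completeSpace_coe
  obtain h := (Theta_contracting (R := R) hR0 hR).fixedPoint_isFixedPt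
  set φ := ContractingWith.fixedPoint _ (Theta_contracting (R := R) hR0 hR) with hφ
  refine ⟨fun x => φ.1 x, φ.1.continuous, fun x => ⟨(φ.2 x).1, (φ.2 x).2⟩, fun x => ?_⟩
  conv_lhs => rw [← h]
  rfl

end Fixed

lemma mf_ubc (hf : Continuous f) {c : ℝ} (hc2 : ∀ x, f x ≤ c) {s : ℝ} (hs : 0 ≤ s) :
    mf f s ≤ 4 * π * c / 3 * s ^ 3 := by
  have := int_cube (4 * π * c) s
  rw [show (4:ℝ) * π * c / 3 = (4 * π * c) / 3 by ring, ← this]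
  apply intervalIntegral.integral_mono_on hs
    ((contI hf).intervalIntegrable _ _)
    ((by fun_prop : Continuous fun t : ℝ => 4 * π * c * t ^ 2).intervalIntegrable _ _)
  intro x hx
  nlinarith [mul_nonneg (mul_nonneg (by positivity : (0:ℝ) ≤ 4*π) (sq_nonneg x))
    (sub_nonneg.2 (hc2 x))]

end HardStarAux

open HardStarAux

/-- Existence of small hard stars: solutions of the hard star ODE system
`dm/dr = 4πr²ρ`, `dρ/dr = −((2ρ−1)/(r−2m))·(m/r + 4πr²(ρ−1))` on `(0,R)`
with `m(0) = 0`, `ρ(R) = 1`, together with the stated bounds. -/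
theorem stmt0 :
    ∃ R₀ > (0:ℝ), R₀ < Real.sqrt (3 / (4 * π)) ∧
    ∃ C > (0:ℝ), ∀ R : ℝ, 0 < R → R < R₀ →
      ∃ m ρ : ℝ → ℝ,
        ContinuousOn m (Icc 0 R) ∧ ContinuousOn ρ (Icc 0 R) ∧
        AntitoneOn ρ (Icc 0 R) ∧ MonotoneOn m (Icc 0 R) ∧
        m 0 = 0 ∧ ρ R = 1 ∧
        (∀ r ∈ Ioo (0:ℝ) R,
          HasDerivAt m (4 * π * r ^ 2 * ρ r) r ∧
          HasDerivAt ρ (-((2 * ρ r - 1) / (r - 2 * m r)) *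
            (m r / r + 4 * π * r ^ 2 * (ρ r - 1))) r) ∧
        ContinuousOn (fun r => 4 * π * r ^ 2 * ρ r) (Ioo 0 R) ∧
        ContinuousOn (fun r => -((2 * ρ r - 1) / (r - 2 * m r)) *
            (m r / r + 4 * π * r ^ 2 * (ρ r - 1))) (Ioo 0 R) ∧
        (∀ r ∈ Ioc (0:ℝ) R,
          1 ≤ ρ r ∧ ρ r ≤ 1 + C * R ^ 2 ∧
          1 ≤ 3 / (4 * π) * (m r / r ^ 3) ∧
          3 / (4 * π) * (m r / r ^ 3) ≤ 1 + C * R ^ 2) := by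
  refine ⟨1/100, by norm_num, ?_, 42 * π, by positivity, ?_⟩
  · rw [Real.lt_sqrt (by norm_num)]
    rw [lt_div_iff₀ (by positivity)]
    nlinarith [Real.pi_le_four, Real.pi_pos]
  intro R hR0 hR
  obtain ⟨ρ0, hc, hb, hfix⟩ := exists_fixed hR0 hR
  have h1 : ∀ x, 1 ≤ ρ0 x := fun x => (hb x).1
  have h2 : ∀ x, ρ0 x ≤ 2 := fun x => (hb x).2
  have hRI : R ∈ Icc (0:ℝ) (1/100) := ⟨hR0.le, hR.le⟩
  refine ⟨mf ρ0, ρ0, (mf_cont hc).continuousOn, hc.continuousOn, ?_, ?_, ?_, ?_, ?_, ?_, ?_, ?_⟩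
  · -- AntitoneOn
    intro a ha b hb' hab
    rw [hfix a, hfix b]
    have hIa : cl R a ∈ Icc (0:ℝ) (1/100) := by
      rw [cl_eq ha]; exact ⟨ha.1, ha.2.trans hR.le⟩
    have hIb : cl R b ∈ Icc (0:ℝ) (1/100) := by
      rw [cl_eq hb']; exact ⟨hb'.1, hb'.2.trans hR.le⟩
    have hadd : (∫ s in cl R a..cl R b, G ρ0 s) + (∫ s in cl R b..R, G ρ0 s)
        = ∫ s in cl R a..R, G ρ0 s :=
      intervalIntegral.integral_add_adjacent_intervals
        (G_ii hc h1 h2 hIa hIb) (G_ii hc h1 h2 hIb hRI)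
    have hnn : 0 ≤ ∫ s in cl R a..cl R b, G ρ0 s := by
      rw [cl_eq ha, cl_eq hb']
      apply intervalIntegral.integral_nonneg hab
      intro u hu
      exact G_nonneg hc h1 h2 (ha.1.trans hu.1) (hu.2.trans (hb'.2.trans hR.le))
    simp only [T]
    linarith
  · -- MonotoneOn
    intro a ha b hb' hab
    have hadd : (∫ t in (0:ℝ)..a, 4 * π * t ^ 2 * ρ0 t)
        + (∫ t in a..b, 4 * π * t ^ 2 * ρ0 t) = ∫ t in (0:ℝ)..b, 4 * π * t ^ 2 * ρ0 t :=
      intervalIntegral.integral_add_adjacent_intervals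
        ((contI hc).intervalIntegrable _ _) ((contI hc).intervalIntegrable _ _)
    have hnn : 0 ≤ ∫ t in a..b, 4 * π * t ^ 2 * ρ0 t := by
      apply intervalIntegral.integral_nonneg hab
      intro u hu
      have := h1 u
      positivity
    simp only [mf]
    linarith
  · exact intervalIntegral.integral_same
  · rw [hfix R]
    simp only [T, cl_eq (⟨hR0.le, le_refl R⟩ : R ∈ Icc 0 R), intervalIntegral.integral_same]
    norm_num
  · -- derivatives
    intro r hr
    constructor
    · exact mf_hasDerivAt hc r
    · have hrI : r ∈ Icc (0:ℝ) (1/100) := ⟨hr.1.le, (hr.2.trans hR).le⟩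
      have base : HasDerivAt (fun x => 1 + ∫ s in x..R, G ρ0 s) (-G ρ0 r) r := by
        have hint : IntervalIntegrable (G ρ0) MeasureTheory.volume r R :=
          G_ii hc h1 h2 hrI hRI
        have hder := intervalIntegral.integral_hasDerivAt_left hint
          ((G_meas hc).stronglyMeasurable.stronglyMeasurableAtFilter)
          (G_contAt hc h1 h2 hr.1 (hr.2.trans hR))
        simpa using hder.const_add 1
      have hev : ρ0 =ᶠ[nhds r] (fun x => 1 + ∫ s in x..R, G ρ0 s) := by
        filter_upwards [isOpen_Ioo.eventually_mem hr] with x hx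
        rw [hfix x]
        simp only [T, cl_eq ⟨hx.1.le, hx.2.le⟩]
      have : HasDerivAt ρ0 (-G ρ0 r) r := base.congr_of_eventuallyEq hev
      rw [show -((2 * ρ0 r - 1) / (r - 2 * mf ρ0 r)) *
          (mf ρ0 r / r + 4 * π * r ^ 2 * (ρ0 r - 1)) = -G ρ0 r from (neg_mul _ _).trans rfl]
      exact this
  · exact ((by fun_prop : Continuous fun r => 4 * π * r ^ 2 * ρ0 r)).continuousOn
  · -- continuity of the rho-RHS on Ioo
    apply ContinuousOn.mul
    · apply ContinuousOn.neg
      apply ContinuousOn.div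
      · fun_prop
      · exact (continuous_id.sub (continuous_const.mul (mf_cont hc))).continuousOn
      · intro x hx
        have := den_lb hc h2 hx.1.le ((hx.2.trans hR).le)
        have : 0 < x - 2 * mf ρ0 x := by linarith [hx.1]
        exact this.ne'
    · apply ContinuousOn.add
      · exact ContinuousOn.div (mf_cont hc).continuousOn continuousOn_id
          (fun x hx => hx.1.ne')
      · fun_prop
  · -- bounds
    intro r hr
    have hrI0 : (0:ℝ) ≤ r := hr.1.le
    have hρu : ∀ x, ρ0 x ≤ 1 + 42 * π * R ^ 2 := by
      intro x
      rw [hfix x]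
      exact T_ub hc h1 h2 hR0 hR x
    have hml : 4 * π / 3 * r ^ 3 ≤ mf ρ0 r := mf_lb hc h1 hrI0
    have hmu : mf ρ0 r ≤ 4 * π * (1 + 42 * π * R ^ 2) / 3 * r ^ 3 := mf_ubc hc hρu hrI0
    have hr3 : (0:ℝ) < r ^ 3 := pow_pos hr.1 3
    have hpi := Real.pi_pos
    have heq : 3 / (4 * π) * (mf ρ0 r / r ^ 3) = mf ρ0 r / (4 * π / 3 * r ^ 3) := by
      field_simp
    refine ⟨by rw [hfix r]; exact T_lb hc h1 h2 hR0 hR r, by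
        rw [hfix r]
        have := T_ub hc h1 h2 hR0 hR r
        linarith, ?_, ?_⟩
    · rw [heq]
      rw [le_div_iff₀ (by positivity)]
      linarith
    · rw [heq]
      rw [div_le_iff₀ (by positivity)]
      nlinarith [hmu]
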